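/- Let N be a ℤ[t]-submodule of a length-one ℤ[t]-module M of exponent 2ⁿ. Then N has colength one in M (i.e. M/N has length one) if and only if N equals its closure N̄. -/

import Mathlib

/-- An `R`-module `M` has *length one* if there is a short exact sequence
`0 → F₁ → F₀ → M → 0` with `F₀`, `F₁` finitely generated free `R`-modules. -/
def IsLengthOne (R M : Type*) [CommRing R] [AddCommGroup M] [Module R M] : Prop :=
  ∃ (k l : ℕ) (f : (Fin k → R) →ₗ[R] (Fin l → R)) (g : (Fin l → R) →ₗ[R] M),
    Function.Injective f ∧ Function.Surjective g ∧ LinearMap.range f = LinearMap.ker g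

/-- The closure `N̄ = {x ∈ M : p • x ∈ N for some p ∈ ℤ[t] with p ∉ 2ℤ[t]}` of a
submodule `N` of a `ℤ[t]`-module `M`, as a set. -/
def closureSet {M : Type*} [AddCommGroup M] [Module (Polynomial ℤ) M]
    (N : Submodule (Polynomial ℤ) M) : Set M :=
  {x | ∃ p : Polynomial ℤ, p ∉ Ideal.span {(2 : Polynomial ℤ)} ∧ p • x ∈ N}



/-- A presentation by arbitrary finite free modules gives `IsLengthOne`. -/
theorem isLengthOne_of_presentation (R M : Type*) [CommRing R] [AddCommGroup M] [Module R M]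
    (F₁ F₀ : Type*) [AddCommGroup F₁] [Module R F₁] [AddCommGroup F₀] [Module R F₀]
    [Module.Free R F₁] [Module.Finite R F₁] [Module.Free R F₀] [Module.Finite R F₀]
    (f : F₁ →ₗ[R] F₀) (g : F₀ →ₗ[R] M)
    (hf : Function.Injective f) (hg : Function.Surjective g)
    (hfg : LinearMap.range f = LinearMap.ker g) : IsLengthOne R M := by
  classical
  let b₁ := Module.Free.chooseBasis R F₁
  let b₀ := Module.Free.chooseBasis R F₀
  let k := Fintype.card (Module.Free.ChooseBasisIndex R F₁)
  let l := Fintype.card (Module.Free.ChooseBasisIndex R F₀)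
  let e₁ : F₁ ≃ₗ[R] (Fin k → R) := (b₁.reindex (Fintype.equivFin _)).equivFun
  let e₀ : F₀ ≃ₗ[R] (Fin l → R) := (b₀.reindex (Fintype.equivFin _)).equivFun
  refine ⟨k, l, (e₀.toLinearMap.comp f).comp e₁.symm.toLinearMap,
    g.comp e₀.symm.toLinearMap, ?_, ?_, ?_⟩
  · exact e₀.injective.comp (hf.comp e₁.symm.injective)
  · exact hg.comp e₀.symm.surjective
  · rw [LinearMap.range_comp, LinearEquiv.range, Submodule.map_top, LinearMap.range_comp,
      hfg, LinearMap.ker_comp]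
    exact Submodule.map_equiv_eq_comap_symm e₀ (LinearMap.ker g)


/-- Horseshoe: an extension of length-one modules is length one. -/
theorem isLengthOne_of_ses {R A P C : Type*} [CommRing R]
    [AddCommGroup A] [Module R A] [AddCommGroup P] [Module R P] [AddCommGroup C] [Module R C]
    (ι : A →ₗ[R] P) (π : P →ₗ[R] C) (hι : Function.Injective ι) (hπ : Function.Surjective π)
    (hexact : LinearMap.range ι = LinearMap.ker π)
    (hA : IsLengthOne R A) (hC : IsLengthOne R C) : IsLengthOne R P := by
  classical
  obtain ⟨kA, lA, fA, gA, hfA, hgA, hA⟩ := hA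
  obtain ⟨kC, lC, fC, gC, hfC, hgC, hC⟩ := hC
  -- lift of gC along π on basis
  choose s hs using fun i : Fin lC => hπ (gC (Pi.basisFun R (Fin lC) i))
  let σ : (Fin lC → R) →ₗ[R] P := (Pi.basisFun R (Fin lC)).constr ℕ s
  have hσ : ∀ y, π (σ y) = gC y := by
    intro y
    have : π.comp σ = gC := by
      apply (Pi.basisFun R (Fin lC)).ext
      intro i
      simp only [LinearMap.comp_apply, σ, Module.Basis.constr_basis]
      exact hs i
    exact DFunLike.congr_fun this y
  -- correction map w
  have hker : ∀ i : Fin kC, ∃ u : Fin lA → R, ι (gA u) = σ (fC (Pi.basisFun R (Fin kC) i)) := by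
    intro i
    have h1 : σ (fC (Pi.basisFun R (Fin kC) i)) ∈ LinearMap.ker π := by
      rw [LinearMap.mem_ker, hσ]
      have : fC (Pi.basisFun R (Fin kC) i) ∈ LinearMap.ker gC := by
        rw [← hC]; exact LinearMap.mem_range_self _ _
      exact this
    rw [← hexact] at h1
    obtain ⟨a, ha⟩ := h1
    obtain ⟨u, hu⟩ := hgA a
    exact ⟨u, by rw [hu, ha]⟩
  choose w hw using hker
  let W : (Fin kC → R) →ₗ[R] (Fin lA → R) := (Pi.basisFun R (Fin kC)).constr ℕ w
  have hW : ∀ v, ι (gA (W v)) = σ (fC v) := by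
    intro v
    have : (ι.comp (gA.comp W)) = σ.comp fC := by
      apply (Pi.basisFun R (Fin kC)).ext
      intro i
      simp only [LinearMap.comp_apply, W, Module.Basis.constr_basis]
      exact hw i
    exact DFunLike.congr_fun this v
  -- the maps
  let g : (Fin lA → R) × (Fin lC → R) →ₗ[R] P :=
    (ι.comp gA).comp (LinearMap.fst R _ _) + σ.comp (LinearMap.snd R _ _)
  let f : (Fin kA → R) × (Fin kC → R) →ₗ[R] (Fin lA → R) × (Fin lC → R) :=
    LinearMap.prod (fA.comp (LinearMap.fst R _ _) - W.comp (LinearMap.snd R _ _))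
      (fC.comp (LinearMap.snd R _ _))
  have hgapp : ∀ x y, g (x, y) = ι (gA x) + σ y := fun x y => rfl
  have hfapp : ∀ u v, f (u, v) = (fA u - W v, fC v) := fun u v => rfl
  refine isLengthOne_of_presentation R P _ _ f g ?_ ?_ ?_
  · rintro ⟨u, v⟩ ⟨u', v'⟩ h
    rw [hfapp, hfapp, Prod.mk.injEq] at h
    have hv : v = v' := hfC h.2
    subst hv
    have hu : fA u = fA u' := sub_left_inj.mp h.1
    simp [hfA hu]
  · intro x
    obtain ⟨y, hy⟩ := hgC (π x)
    have h1 : π (x - σ y) = 0 := by rw [map_sub, hσ, hy, sub_self]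
    have h2 : x - σ y ∈ LinearMap.range ι := by rw [hexact]; exact h1
    obtain ⟨a, ha⟩ := h2
    obtain ⟨u, hu⟩ := hgA a
    exact ⟨(u, y), by rw [hgapp, hu, ha]; abel⟩
  · apply le_antisymm
    · rintro _ ⟨⟨u, v⟩, rfl⟩
      rw [LinearMap.mem_ker, hfapp, hgapp, map_sub, map_sub, hW]
      have : gA (fA u) = 0 := by
        have : fA u ∈ LinearMap.ker gA := by rw [← hA]; exact LinearMap.mem_range_self _ _
        exact this
      rw [this, map_zero, zero_sub, neg_add_cancel]
    · rintro ⟨x, y⟩ hxy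
      rw [LinearMap.mem_ker, hgapp] at hxy
      have hy : gC y = 0 := by
        have := congrArg π hxy
        rw [map_add, map_zero, hσ] at this
        have hπι : π (ι (gA x)) = 0 := by
          have : ι (gA x) ∈ LinearMap.ker π := by rw [← hexact]; exact LinearMap.mem_range_self _ _
          exact this
        rw [hπι, zero_add] at this
        exact this
      obtain ⟨v, hv⟩ : y ∈ LinearMap.range fC := by rw [hC]; exact hy
      have hx : ι (gA (x + W v)) = 0 := by
        rw [map_add, map_add, hW, hv, hxy]
      have hx2 : gA (x + W v) = 0 := hι (by rw [hx, map_zero])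
      obtain ⟨u, hu⟩ : x + W v ∈ LinearMap.range fA := by rw [hA]; exact hx2
      refine ⟨(u, v), ?_⟩
      rw [hfapp, hu, hv]
      simp


local notation "R" => Polynomial ℤ
local notation "I2" => Ideal.span {(2 : Polynomial ℤ)}

noncomputable def polyEquiv : Polynomial (ZMod 2) ≃+* (Polynomial ℤ ⧸ Ideal.span {(2 : Polynomial ℤ)}) := by
  have h : Ideal.map (Polynomial.C : ℤ →+* Polynomial ℤ) (Ideal.span {(2:ℤ)})
      = Ideal.span {(2 : Polynomial ℤ)} := by
    rw [Ideal.map_span, Set.image_singleton]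
    norm_num
  exact ((Polynomial.mapEquiv (Int.quotientSpanEquivZMod 2).symm).trans
    (Ideal.polynomialQuotientEquivQuotientPolynomial (Ideal.span {(2:ℤ)}))).trans
    (Ideal.quotEquivOfEq h)

noncomputable instance : IsDomain (Polynomial ℤ ⧸ Ideal.span {(2 : Polynomial ℤ)}) :=
  Function.Injective.isDomain polyEquiv.symm.toRingHom polyEquiv.symm.injective

instance : IsPrincipalIdealRing (Polynomial ℤ ⧸ Ideal.span {(2 : Polynomial ℤ)}) :=
  IsPrincipalIdealRing.of_surjective polyEquiv.toRingHom polyEquiv.surjective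

theorem isLengthOne_of_two_torsion (P : Type*) [AddCommGroup P] [Module R P]
    [Module.Finite R P]
    (h2 : ∀ x : P, (2 : R) • x = 0)
    (hS : ∀ (p : R) (x : P), p ∉ I2 → p • x = 0 → x = 0) :
    IsLengthOne R P := by
  classical
  have htor : Module.IsTorsionBySet R P (I2 : Set R) := by
    rintro x ⟨a, ha⟩
    obtain ⟨c, rfl⟩ := Ideal.mem_span_singleton.mp ha
    show (2 * c) • x = 0
    rw [mul_comm, mul_smul, h2, smul_zero]
  letI : Module (R ⧸ I2) P := htor.module
  haveI : IsScalarTower R (R ⧸ I2) P := htor.isScalarTower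
  haveI : Module.Finite (R ⧸ I2) P := Module.Finite.of_restrictScalars_finite R _ _
  haveI : NoZeroSMulDivisors (R ⧸ I2) P := by
    refine ⟨fun {r x} h => ?_⟩
    obtain ⟨p, rfl⟩ := Ideal.Quotient.mk_surjective r
    by_cases hp : p ∈ I2
    · left; exact (Ideal.Quotient.eq_zero_iff_mem).mpr hp
    · right
      refine hS p x hp ?_
      rw [← htor.mk_smul]; exact h
  haveI : Module.Free (R ⧸ I2) P := Module.free_of_finite_type_torsion_free'
  let ι := Module.Free.ChooseBasisIndex (R ⧸ I2) P
  let l := Fintype.card ι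
  let b : Module.Basis (Fin l) (R ⧸ I2) P :=
    (Module.Free.chooseBasis (R ⧸ I2) P).reindex (Fintype.equivFin ι)
  let g : (Fin l → R) →ₗ[R] P := (Pi.basisFun R (Fin l)).constr ℕ (fun i => b i)
  have hgapp : ∀ z : Fin l → R, g z = ∑ i, z i • b i := by
    intro z
    rw [Module.Basis.constr_apply_fintype]
    simp [Pi.basisFun_equivFun]
  have hsmul : ∀ (p : R) (x : P), (Ideal.Quotient.mk I2 p) • x = p • x := fun p x => htor.mk_smul p x
  let f : (Fin l → R) →ₗ[R] (Fin l → R) := (2 : R) • LinearMap.id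
  have hfapp : ∀ z : Fin l → R, f z = (2 : R) • z := fun z => rfl
  refine isLengthOne_of_presentation R P _ _ f g ?_ ?_ ?_
  · intro z z' h
    rw [hfapp, hfapp] at h
    funext i
    have : (2 : R) * z i = (2 : R) * z' i := congrFun h i
    exact mul_left_cancel₀ (by norm_num) this
  · intro x
    have hrep := b.sum_repr x
    choose p hp using fun j : Fin l => Ideal.Quotient.mk_surjective (b.repr x j)
    refine ⟨p, ?_⟩
    rw [hgapp]
    calc ∑ i, p i • b i = ∑ i, b.repr x i • b i := by
          refine Finset.sum_congr rfl fun i _ => ?_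
          rw [← hp i, hsmul]
      _ = x := hrep
  · apply le_antisymm
    · rintro _ ⟨z, rfl⟩
      rw [LinearMap.mem_ker, hfapp, map_smul]
      exact h2 (g z)
    · intro z hz
      rw [LinearMap.mem_ker, hgapp] at hz
      have hz' : ∀ i, Ideal.Quotient.mk I2 (z i) = 0 := by
        have hli := Fintype.linearIndependent_iff.mp b.linearIndependent
          (fun i => Ideal.Quotient.mk I2 (z i))
        refine hli ?_
        calc ∑ i, Ideal.Quotient.mk I2 (z i) • b i = ∑ i, z i • b i := by
              exact Finset.sum_congr rfl fun i _ => hsmul _ _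
          _ = 0 := hz
      have hdvd : ∀ i, ∃ w : R, z i = 2 * w := by
        intro i
        have := Ideal.Quotient.eq_zero_iff_mem.mp (hz' i)
        rw [Ideal.mem_span_singleton] at this
        obtain ⟨w, hw⟩ := this
        exact ⟨w, hw⟩
      choose w hw using hdvd
      refine ⟨w, ?_⟩
      rw [hfapp]
      funext i
      exact (hw i).symm



theorem isLengthOne_zero {S M : Type*} [CommRing S] [AddCommGroup M] [Module S M]
    (h : ∀ x : M, x = 0) : IsLengthOne S M := by
  refine ⟨0, 0, LinearMap.id, 0, fun a b hab => hab, fun x => ⟨0, (h x).symm⟩, ?_⟩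
  rw [LinearMap.range_id, LinearMap.ker_zero]

theorem isLengthOne_of_storsion_free (n : ℕ) (P : Type*) [AddCommGroup P] [Module R P]
    [Module.Finite R P]
    (hexp : ∀ x : P, (2 : R) ^ n • x = 0)
    (hS : ∀ (p : R) (x : P), p ∉ I2 → p • x = 0 → x = 0) :
    IsLengthOne R P := by
  induction n generalizing P with
  | zero =>
    refine isLengthOne_zero fun x => ?_
    have := hexp x
    rwa [pow_zero, one_smul] at this
  | succ n ih =>
    let φ : P →ₗ[R] P := (2 : R) • LinearMap.id
    have hφapp : ∀ x : P, φ x = (2 : R) • x := fun x => rfl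
    let A := LinearMap.ker φ
    haveI : Module.Finite R A := Module.Finite.iff_fg.mpr (IsNoetherian.noetherian A)
    have hA : IsLengthOne R A := by
      refine isLengthOne_of_two_torsion A ?_ ?_
      · intro x
        ext
        have hx : (x : P) ∈ LinearMap.ker φ := x.2
        simp only [hφapp, LinearMap.mem_ker] at hx
        simp [hx]
      · intro p x hp hpx
        ext
        refine hS p (x : P) hp ?_
        have : ((p • x : A) : P) = 0 := by rw [hpx]; rfl
        simpa using this
    have hC : IsLengthOne R (LinearMap.range φ) := by
      refine ih (LinearMap.range φ) ?_ ?_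
      · rintro ⟨_, y, rfl⟩
        ext
        show (2:R)^n • (φ y) = (0:P)
        rw [hφapp, ← mul_smul, ← pow_succ]
        exact hexp y
      · intro p x hp hpx
        ext
        refine hS p (x : P) hp ?_
        have : ((p • x : LinearMap.range φ) : P) = 0 := by rw [hpx]; rfl
        simpa using this
    refine isLengthOne_of_ses A.subtype φ.rangeRestrict A.injective_subtype
      φ.surjective_rangeRestrict ?_ hA hC
    rw [Submodule.range_subtype, LinearMap.ker_rangeRestrict]


theorem prime_two_poly : Prime (2 : R) := by
  have : (2 : R) = Polynomial.C 2 := by norm_num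
  rw [this, Polynomial.prime_C_iff]
  exact Int.prime_two

/-- In a length-one module, no nonzero `2`-torsion element is killed by `p ∉ (2)`. -/
theorem eq_zero_of_lengthOne {P : Type*} [AddCommGroup P] [Module R P]
    (hP : IsLengthOne R P) (p : R) (hp : p ∉ I2) (x : P)
    (hpx : p • x = 0) (h2x : (2 : R) • x = 0) : x = 0 := by
  obtain ⟨k, l, f, g, hf, hg, hfg⟩ := hP
  obtain ⟨z, rfl⟩ := hg x
  have h2z : (2 : R) • z ∈ LinearMap.ker g := by
    rw [LinearMap.mem_ker, map_smul]; exact h2x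
  have hpz : p • z ∈ LinearMap.ker g := by
    rw [LinearMap.mem_ker, map_smul]; exact hpx
  rw [← hfg] at h2z hpz
  obtain ⟨a, ha⟩ := h2z
  obtain ⟨b, hb⟩ := hpz
  have key : p • a = (2 : R) • b := by
    apply hf
    rw [map_smul, map_smul, ha, hb, smul_comm]
  have hdvd : ∀ i, ∃ c : R, a i = 2 * c := by
    intro i
    have h1 : p * a i = 2 * b i := congrFun key i
    have h2 : (2 : R) ∣ p * a i := ⟨b i, h1⟩
    rcases (prime_two_poly.dvd_mul).mp h2 with h | h
    · exact absurd (Ideal.mem_span_singleton.mpr h) hp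
    · exact h
  choose c hc using hdvd
  have hac : a = (2 : R) • c := funext fun i => by simpa [Pi.smul_apply, smul_eq_mul] using hc i
  have hz : f c = z := by
    have h1 : (2 : R) • f c = (2 : R) • z := by
      rw [← map_smul, ← hac, ha]
    funext i
    have := congrFun h1 i
    exact mul_left_cancel₀ (two_ne_zero' R) this
  have : z ∈ LinearMap.ker g := by rw [← hfg]; exact ⟨c, hz⟩
  exact this

theorem eq_zero_of_lengthOne' {P : Type*} [AddCommGroup P] [Module R P]
    (hP : IsLengthOne R P) (p : R) (hp : p ∉ I2) (n : ℕ) (x : P)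
    (hpx : p • x = 0) (h2x : (2 : R) ^ n • x = 0) : x = 0 := by
  induction n generalizing x with
  | zero => rwa [pow_zero, one_smul] at h2x
  | succ n ih =>
    have h1 : (2 : R) ^ n • x = 0 := by
      refine eq_zero_of_lengthOne hP p hp _ ?_ ?_
      · rw [smul_comm, hpx, smul_zero]
      · rw [← mul_smul, ← pow_succ']; exact h2x
    exact ih x hpx h1


/-- Let `N` be a `ℤ[t]`-submodule of a length-one `ℤ[t]`-module `M` of exponent `2ⁿ`.
Then `N` has colength one in `M` (i.e. `M/N` has length one) iff `N` equals its closure. -/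
theorem colengthOne_iff_closed
    (M : Type) [AddCommGroup M] [Module (Polynomial ℤ) M]
    (n : ℕ) (hexp : ∀ x : M, (2 : Polynomial ℤ) ^ n • x = 0)
    (hM : IsLengthOne (Polynomial ℤ) M)
    (N : Submodule (Polynomial ℤ) M) :
    IsLengthOne (Polynomial ℤ) (M ⧸ N) ↔ closureSet N = (N : Set M) := by
  constructor
  · intro hL
    apply Set.Subset.antisymm
    · rintro x ⟨p, hp, hpN⟩
      show x ∈ N
      have h1 : p • (Submodule.Quotient.mk x : M ⧸ N) = 0 := by
        rw [← Submodule.Quotient.mk_smul, Submodule.Quotient.mk_eq_zero]; exact hpN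
      have h2 : (2 : R) ^ n • (Submodule.Quotient.mk x : M ⧸ N) = 0 := by
        rw [← Submodule.Quotient.mk_smul, hexp x, Submodule.Quotient.mk_zero]
      have h3 := eq_zero_of_lengthOne' hL p hp n _ h1 h2
      rwa [Submodule.Quotient.mk_eq_zero] at h3
    · intro x hx
      refine ⟨1, ?_, by simpa using hx⟩
      intro h1
      rw [Ideal.mem_span_singleton] at h1
      exact prime_two_poly.not_unit (isUnit_of_dvd_one h1)
  · intro hcl
    haveI : Module.Finite R M := by
      obtain ⟨k, l, f, g, hf, hg, hfg⟩ := hM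
      exact Module.Finite.of_surjective g hg
    haveI : Module.Finite R (M ⧸ N) := Module.Finite.quotient R N
    refine isLengthOne_of_storsion_free n (M ⧸ N) ?_ ?_
    · intro x
      obtain ⟨y, rfl⟩ := Submodule.Quotient.mk_surjective N x
      rw [← Submodule.Quotient.mk_smul, hexp y, Submodule.Quotient.mk_zero]
    · intro p x hp hpx
      obtain ⟨y, rfl⟩ := Submodule.Quotient.mk_surjective N x
      rw [← Submodule.Quotient.mk_smul, Submodule.Quotient.mk_eq_zero] at hpx
      have hy : y ∈ closureSet N := ⟨p, hp, hpx⟩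
      rw [hcl] at hy
      rwa [Submodule.Quotient.mk_eq_zero]
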